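/- Let λ > 0, μ > 0, u ∈ ℝ. For ε > 0 let M_ε(x) be the matrix ((e^{κ_ε x}, e^{−κ_ε x}), (κ_ε e^{κ_ε x}, −κ_ε e^{−κ_ε x})) with κ_ε = √(λ + μ/ε), and define P_ε = N(u+ε)^{−1} M_ε(u+ε) M_ε(u−ε)^{−1} N(u−ε) and Q_ε = N(u+ε)^{−1} M_ε(u+ε) M_ε(u−ε)^{−1} − N(u+ε)^{−1}. Then, as ε → 0⁺, P_ε converges to P̄ = (1/√λ)·((√λ+μ, μe^{−2√λ u}), (−μe^{2√λ u}, √λ−μ)) and Q_ε converges to Q̄ = (μ/√λ)·((e^{−√λ u}, 0), (−e^{√λ u}, 0)). -/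

import Mathlib

open Matrix Real

/-- The fundamental matrix `N(x)` associated with parameter `λ`:
`N(x) = ((e^{√λ x}, e^{−√λ x}), (√λ e^{√λ x}, −√λ e^{−√λ x}))`.
The matrix `M(x)` of the paper is `Nmat (λ+μ) x`. -/
noncomputable def Nmat (lam x : ℝ) : Matrix (Fin 2) (Fin 2) ℝ :=
  !![Real.exp (Real.sqrt lam * x), Real.exp (-(Real.sqrt lam * x));
     Real.sqrt lam * Real.exp (Real.sqrt lam * x),
       -(Real.sqrt lam * Real.exp (-(Real.sqrt lam * x)))]

open Filter

/-- Explicit inverse of `Nmat`. -/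
noncomputable def Ninv (lam x : ℝ) : Matrix (Fin 2) (Fin 2) ℝ :=
  (2 * Real.sqrt lam)⁻¹ •
    !![Real.sqrt lam * Real.exp (-(Real.sqrt lam * x)), Real.exp (-(Real.sqrt lam * x));
       Real.sqrt lam * Real.exp (Real.sqrt lam * x), -(Real.exp (Real.sqrt lam * x))]

lemma Nmat_mul_Ninv (lam x : ℝ) (hl : 0 < lam) : Nmat lam x * Ninv lam x = 1 := by
  have hs : 0 < Real.sqrt lam := Real.sqrt_pos.mpr hl
  ext i j
  fin_cases i <;> fin_cases j <;>
    simp [Nmat, Ninv, Matrix.mul_apply, Fin.sum_univ_two, Matrix.one_apply,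
      Real.exp_neg] <;>
    field_simp <;> ring

lemma Nmat_inv (lam x : ℝ) (hl : 0 < lam) : (Nmat lam x)⁻¹ = Ninv lam x :=
  Matrix.inv_eq_right_inv (Nmat_mul_Ninv lam x hl)

/-- The product `M(a) M(b)⁻¹` in terms of `d = a − b`. -/
lemma Nmat_mul_Ninv' (l a b : ℝ) (hl : 0 < l) :
    Nmat l a * Ninv l b =
    !![(Real.exp (Real.sqrt l * (a - b)) + Real.exp (-(Real.sqrt l * (a - b)))) / 2,
         (Real.exp (Real.sqrt l * (a - b)) - Real.exp (-(Real.sqrt l * (a - b)))) /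
           (2 * Real.sqrt l);
       Real.sqrt l * (Real.exp (Real.sqrt l * (a - b)) - Real.exp (-(Real.sqrt l * (a - b)))) / 2,
         (Real.exp (Real.sqrt l * (a - b)) + Real.exp (-(Real.sqrt l * (a - b)))) / 2] := by
  have hs : 0 < Real.sqrt l := Real.sqrt_pos.mpr hl
  ext i j
  fin_cases i <;> fin_cases j <;>
    simp [Nmat, Ninv, Matrix.mul_apply, Fin.sum_univ_two, mul_sub, Real.exp_sub,
      Real.exp_neg] <;>
    field_simp <;> ring

/-- `(e^x − e^{−x})/x → 2` as `x → 0` (punctured). -/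
lemma tendsto_expdiff :
    Tendsto (fun x : ℝ => (Real.exp x - Real.exp (-x)) / x) (nhdsWithin 0 {0}ᶜ) (nhds 2) := by
  have hd : HasDerivAt (fun x : ℝ => Real.exp x - Real.exp (-x)) 2 0 := by
    have h1 : HasDerivAt (fun x : ℝ => Real.exp (-x)) (-1) 0 := by
      simpa [Function.comp_def] using (Real.hasDerivAt_exp (-0)).comp 0 (hasDerivAt_neg 0)
    have h2 : HasDerivAt (fun x : ℝ => Real.exp x - Real.exp (-x)) (1 + 1) 0 := by
      simpa [Pi.sub_def] using (Real.hasDerivAt_exp 0).sub h1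
    convert h2 using 1
    norm_num
  have := hasDerivAt_iff_tendsto_slope.mp hd
  refine this.congr fun x => ?_
  simp [slope_def_field]

lemma continuous_Nmat (lam : ℝ) : Continuous fun x => Nmat lam x := by
  apply continuous_matrix
  intro i j
  fin_cases i <;> fin_cases j <;> simp [Nmat] <;> fun_prop

lemma continuous_Ninv (lam : ℝ) : Continuous fun x => Ninv lam x := by
  apply continuous_matrix
  intro i j
  fin_cases i <;> fin_cases j <;> simp [Ninv, Matrix.smul_apply] <;> fun_prop

/-- as `ε → 0⁺`, the matrices
`P_ε = N(u+ε)⁻¹ M_ε(u+ε) M_ε(u−ε)⁻¹ N(u−ε)` and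
`Q_ε = N(u+ε)⁻¹ M_ε(u+ε) M_ε(u−ε)⁻¹ − N(u+ε)⁻¹` (where `M_ε` has parameter `λ + μ/ε`)
converge to the limit matrices `P̄` and `Q̄`. -/
theorem statement13 (lam mu u : ℝ) (hlam : 0 < lam) (hmu : 0 < mu) :
    Tendsto (fun ε : ℝ =>
        (Nmat lam (u + ε))⁻¹ * Nmat (lam + mu / ε) (u + ε) *
          (Nmat (lam + mu / ε) (u - ε))⁻¹ * Nmat lam (u - ε))
      (nhdsWithin 0 (Set.Ioi 0))
      (nhds ((1 / Real.sqrt lam) •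
        !![Real.sqrt lam + mu, mu * Real.exp (-(2 * (Real.sqrt lam * u)));
           -(mu * Real.exp (2 * (Real.sqrt lam * u))), Real.sqrt lam - mu])) ∧
    Tendsto (fun ε : ℝ =>
        (Nmat lam (u + ε))⁻¹ * Nmat (lam + mu / ε) (u + ε) *
          (Nmat (lam + mu / ε) (u - ε))⁻¹ - (Nmat lam (u + ε))⁻¹)
      (nhdsWithin 0 (Set.Ioi 0))
      (nhds ((mu / Real.sqrt lam) •
        !![Real.exp (-(Real.sqrt lam * u)), 0;
           -(Real.exp (Real.sqrt lam * u)), 0])) := by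
  have hs : 0 < Real.sqrt lam := Real.sqrt_pos.mpr hlam
  set X : ℝ → ℝ := fun ε => Real.sqrt (lam + mu / ε) * (u + ε - (u - ε)) with hXdef
  -- positivity of the shifted parameter
  have hl' : ∀ ε : ℝ, ε ∈ Set.Ioi (0:ℝ) → 0 < lam + mu / ε := fun ε hε => by
    have : 0 < mu / ε := div_pos hmu hε
    linarith
  -- X ε → 0 within Ioi 0
  have hX0 : Tendsto X (nhdsWithin 0 (Set.Ioi 0)) (nhds 0) := by
    have hcont : Tendsto (fun ε : ℝ => Real.sqrt (4 * (lam * ε ^ 2 + mu * ε)))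
        (nhds 0) (nhds 0) := by
      have : Continuous fun ε : ℝ => Real.sqrt (4 * (lam * ε ^ 2 + mu * ε)) := by fun_prop
      simpa using this.tendsto 0
    refine Tendsto.congr' ?_ (hcont.mono_left nhdsWithin_le_nhds)
    filter_upwards [self_mem_nhdsWithin] with ε (hε : 0 < ε)
    have h1 : u + ε - (u - ε) = 2 * ε := by ring
    have h2 : (0:ℝ) ≤ lam + mu / ε := (hl' ε hε).le
    simp only [hXdef]
    rw [h1, show Real.sqrt (lam + mu / ε) * (2 * ε)
        = Real.sqrt ((lam + mu / ε) * (2 * ε) ^ 2) by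
      rw [Real.sqrt_mul h2, Real.sqrt_sq (by linarith)]]
    congr 1
    field_simp
    ring
  -- X ε is positive on Ioi 0
  have hXpos : ∀ᶠ ε in nhdsWithin (0:ℝ) (Set.Ioi 0), 0 < X ε := by
    filter_upwards [self_mem_nhdsWithin] with ε (hε : 0 < ε)
    have := Real.sqrt_pos.mpr (hl' ε hε)
    have h1 : u + ε - (u - ε) = 2 * ε := by ring
    simp only [hXdef]
    rw [h1]
    exact mul_pos this (by linarith)
  have hXne : Tendsto X (nhdsWithin 0 (Set.Ioi 0)) (nhdsWithin 0 {0}ᶜ) := by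
    rw [tendsto_nhdsWithin_iff]
    exact ⟨hX0, hXpos.mono fun ε h => ne_of_gt h⟩
  -- the slope limit along X
  have hG : Tendsto (fun ε => (Real.exp (X ε) - Real.exp (-X ε)) / X ε)
      (nhdsWithin 0 (Set.Ioi 0)) (nhds 2) := tendsto_expdiff.comp hXne
  -- cosh-type entries → 1
  have hcosh : Tendsto (fun ε => (Real.exp (X ε) + Real.exp (-X ε)) / 2)
      (nhdsWithin 0 (Set.Ioi 0)) (nhds 1) := by
    have hc : Tendsto (fun t : ℝ => (Real.exp t + Real.exp (-t)) / 2) (nhds 0) (nhds 1) := by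
      have : Continuous fun t : ℝ => (Real.exp t + Real.exp (-t)) / 2 := by fun_prop
      simpa using this.tendsto 0
    exact hc.comp hX0
  -- ε → 0 within Ioi 0
  have hid : Tendsto (fun ε : ℝ => ε) (nhdsWithin 0 (Set.Ioi 0)) (nhds 0) :=
    tendsto_id.mono_left nhdsWithin_le_nhds
  -- entry (0,1) → 0
  have h01 : Tendsto (fun ε => (Real.exp (X ε) - Real.exp (-X ε)) /
      (2 * Real.sqrt (lam + mu / ε))) (nhdsWithin 0 (Set.Ioi 0)) (nhds 0) := by
    have h := hG.mul hid
    rw [mul_zero] at h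
    refine Tendsto.congr' ?_ h
    filter_upwards [self_mem_nhdsWithin] with ε (hε : 0 < ε)
    have hk : 0 < Real.sqrt (lam + mu / ε) := Real.sqrt_pos.mpr (hl' ε hε)
    have h1 : u + ε - (u - ε) = 2 * ε := by ring
    simp only [hXdef]
    rw [h1]
    generalize Real.sqrt (lam + mu / ε) = k at hk
    have hεne : ε ≠ 0 := ne_of_gt hε
    field_simp
  -- entry (1,0) → 2 μ
  have h10 : Tendsto (fun ε => Real.sqrt (lam + mu / ε) *
      (Real.exp (X ε) - Real.exp (-X ε)) / 2) (nhdsWithin 0 (Set.Ioi 0)) (nhds (2 * mu)) := by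
    have hlin : Tendsto (fun ε : ℝ => lam * ε + mu) (nhdsWithin 0 (Set.Ioi 0)) (nhds mu) := by
      have : Continuous fun ε : ℝ => lam * ε + mu := by fun_prop
      have h := (this.tendsto 0).mono_left (nhdsWithin_le_nhds (s := Set.Ioi (0:ℝ)))
      simpa using h
    have h := hlin.mul hG
    have hmul : mu * 2 = 2 * mu := by ring
    rw [hmul] at h
    refine Tendsto.congr' ?_ h
    filter_upwards [self_mem_nhdsWithin] with ε (hε : 0 < ε)
    have hk : 0 < Real.sqrt (lam + mu / ε) := Real.sqrt_pos.mpr (hl' ε hε)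
    have hεne : ε ≠ 0 := ne_of_gt hε
    have hk2 : lam * ε + mu = Real.sqrt (lam + mu / ε) ^ 2 * ε := by
      rw [Real.sq_sqrt (hl' ε hε).le]
      field_simp
    have h1 : u + ε - (u - ε) = 2 * ε := by ring
    simp only [hXdef]
    rw [h1, hk2]
    generalize Real.sqrt (lam + mu / ε) = k at hk
    field_simp
  -- the middle product tends to !![1,0;2μ,1]
  have hT : Tendsto (fun ε => Nmat (lam + mu / ε) (u + ε) * Ninv (lam + mu / ε) (u - ε))
      (nhdsWithin 0 (Set.Ioi 0)) (nhds !![1, 0; 2 * mu, 1]) := by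
    have hTF : Tendsto (fun ε =>
        !![(Real.exp (X ε) + Real.exp (-(X ε))) / 2,
             (Real.exp (X ε) - Real.exp (-(X ε))) / (2 * Real.sqrt (lam + mu / ε));
           Real.sqrt (lam + mu / ε) * (Real.exp (X ε) - Real.exp (-(X ε))) / 2,
             (Real.exp (X ε) + Real.exp (-(X ε))) / 2])
        (nhdsWithin 0 (Set.Ioi 0)) (nhds !![1, 0; 2 * mu, 1]) := by
      apply tendsto_pi_nhds.mpr; intro i; apply tendsto_pi_nhds.mpr; intro j
      fin_cases i <;> fin_cases j <;> simp <;>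
        [exact hcosh; exact h01; exact h10; exact hcosh]
    refine Tendsto.congr' ?_ hTF
    filter_upwards [self_mem_nhdsWithin] with ε (hε : 0 < ε)
    rw [Nmat_mul_Ninv' _ _ _ (hl' ε hε)]
  -- continuity pieces
  have hNi : Tendsto (fun ε : ℝ => Ninv lam (u + ε)) (nhdsWithin 0 (Set.Ioi 0))
      (nhds (Ninv lam u)) := by
    have hc : Continuous fun ε : ℝ => Ninv lam (u + ε) :=
      (continuous_Ninv lam).comp (by fun_prop)
    have h := (hc.tendsto 0).mono_left (nhdsWithin_le_nhds (s := Set.Ioi (0:ℝ)))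
    simpa using h
  have hNm : Tendsto (fun ε : ℝ => Nmat lam (u - ε)) (nhdsWithin 0 (Set.Ioi 0))
      (nhds (Nmat lam u)) := by
    have hc : Continuous fun ε : ℝ => Nmat lam (u - ε) :=
      (continuous_Nmat lam).comp (by fun_prop)
    have h := (hc.tendsto 0).mono_left (nhdsWithin_le_nhds (s := Set.Ioi (0:ℝ)))
    simpa using h
  -- rewrite the functions eventually
  have hPev : (fun ε : ℝ =>
        (Nmat lam (u + ε))⁻¹ * Nmat (lam + mu / ε) (u + ε) *
          (Nmat (lam + mu / ε) (u - ε))⁻¹ * Nmat lam (u - ε))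
      =ᶠ[nhdsWithin 0 (Set.Ioi 0)]
      (fun ε : ℝ => Ninv lam (u + ε) *
        (Nmat (lam + mu / ε) (u + ε) * Ninv (lam + mu / ε) (u - ε)) * Nmat lam (u - ε)) := by
    filter_upwards [self_mem_nhdsWithin] with ε (hε : 0 < ε)
    rw [Nmat_inv lam _ hlam, Nmat_inv _ _ (hl' ε hε), mul_assoc (Ninv lam (u + ε))]
  have hQev : (fun ε : ℝ =>
        (Nmat lam (u + ε))⁻¹ * Nmat (lam + mu / ε) (u + ε) *
          (Nmat (lam + mu / ε) (u - ε))⁻¹ - (Nmat lam (u + ε))⁻¹)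
      =ᶠ[nhdsWithin 0 (Set.Ioi 0)]
      (fun ε : ℝ => Ninv lam (u + ε) *
        (Nmat (lam + mu / ε) (u + ε) * Ninv (lam + mu / ε) (u - ε)) - Ninv lam (u + ε)) := by
    filter_upwards [self_mem_nhdsWithin] with ε (hε : 0 < ε)
    rw [Nmat_inv lam _ hlam, Nmat_inv _ _ (hl' ε hε), mul_assoc (Ninv lam (u + ε))]
  -- limit matrix computations
  have hPeq : Ninv lam u * !![1, 0; 2 * mu, 1] * Nmat lam u =
      (1 / Real.sqrt lam) •
        !![Real.sqrt lam + mu, mu * Real.exp (-(2 * (Real.sqrt lam * u)));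
           -(mu * Real.exp (2 * (Real.sqrt lam * u))), Real.sqrt lam - mu] := by
    rw [Ninv, Nmat, Matrix.smul_mul, Matrix.smul_mul, Matrix.mul_fin_two,
      Matrix.mul_fin_two]
    ext i j
    fin_cases i <;> fin_cases j <;>
      simp [Matrix.smul_apply, smul_eq_mul, two_mul, Real.exp_add, Real.exp_neg] <;>
      field_simp <;> ring
  have hQeq : Ninv lam u * !![1, 0; 2 * mu, 1] - Ninv lam u =
      (mu / Real.sqrt lam) •
        !![Real.exp (-(Real.sqrt lam * u)), 0;
           -(Real.exp (Real.sqrt lam * u)), 0] := by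
    rw [Ninv, Matrix.smul_mul, Matrix.mul_fin_two]
    ext i j
    fin_cases i <;> fin_cases j <;>
      simp [Matrix.smul_apply, smul_eq_mul, Real.exp_neg] <;>
      field_simp <;> ring
  constructor
  · have h := (hNi.mul hT).mul hNm
    rw [hPeq] at h
    exact Tendsto.congr' hPev.symm h
  · have h := (hNi.mul hT).sub hNi
    rw [hQeq] at h
    exact Tendsto.congr' hQev.symm h
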